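/- For every natural number n ≥ 1, every odd prime q, and every a ≥ 1, with p = q^a, the power sum S_n(p) = ∑_{i=1}^p i^n satisfies: S_n(p) ≡ φ(p) (mod p) if (q-1) divides n, and S_n(p) ≡ 0 (mod p) if (q-1) does not divide n. -/

import Mathlib

def S (n m : ℕ) : ℕ := ∑ i ∈ Finset.Icc 1 m, i ^ n

open Finset

/-- binomial for square-zero element -/
lemma sq_zero_pow {R : Type*} [CommRing R] (j e : R) (he : e * e = 0) :
    ∀ n : ℕ, 1 ≤ n → (j + e) ^ n = j ^ n + n * j ^ (n - 1) * e := by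
  intro n hn
  induction n with
  | zero => omega
  | succ n ih =>
    rcases Nat.eq_or_lt_of_le hn with h | h
    · have : n = 0 := by omega
      subst this; simp
    · have hn' : 1 ≤ n := by omega
      have h1 := ih hn'
      have hj : j ^ (n - 1) * j = j ^ n := by rw [← pow_succ]; congr 1; omega
      calc (j + e) ^ (n + 1) = (j ^ n + n * j ^ (n-1) * e) * (j + e) := by rw [pow_succ, h1]
        _ = j ^ n * j + (↑n * (j ^ (n-1) * j)) * e + j ^ n * e + (↑n * j ^ (n-1)) * (e * e) := by
            ring
        _ = j ^ (n+1) + (↑(n+1)) * j ^ n * e := by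
            rw [hj, he, ← pow_succ]; push_cast; ring
        _ = j ^ (n+1) + (↑(n+1)) * j ^ ((n+1) - 1) * e := by norm_num

lemma sum_range_mul' {M : Type*} [AddCommMonoid M] (f : ℕ → M) (k m : ℕ) :
    ∑ i ∈ range (k * m), f i = ∑ c ∈ range k, ∑ j ∈ range m, f (c * m + j) := by
  induction k with
  | zero => simp
  | succ k ih =>
    rw [sum_range_succ, ← ih]
    rw [show (k+1) * m = k * m + m by ring]
    rw [range_eq_Ico, ← Finset.sum_Ico_consecutive f (Nat.zero_le _) (Nat.le_add_right _ _)]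
    congr 1
    rw [Finset.sum_Ico_eq_sum_range]
    simp
    rw [Finset.sum_Ico_eq_sum_range]
    simp

lemma S_cast (n m : ℕ) (M : ℕ) :
    ((S n m : ℕ) : ZMod M) = ∑ i ∈ range m, ((i : ZMod M) + 1) ^ n := by
  rw [S, Nat.cast_sum]
  rw [show Finset.Icc 1 m = Finset.Ico 1 (m+1) by rfl, Finset.sum_Ico_eq_sum_range]
  simp [add_comm]

/-- key recursion -/
lemma S_step (n q a : ℕ) (hn : 1 ≤ n) (hodd : Odd q) (ha : 2 ≤ a) :
    S n (q ^ a) ≡ q * S n (q ^ (a - 1)) [MOD q ^ a] := by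
  rw [← ZMod.natCast_eq_natCast_iff]
  set R := ZMod (q ^ a)
  set m := q ^ (a - 1) with hm
  have hqm : q ^ a = q * m := by rw [hm, ← pow_succ']; congr 1; omega
  have hm2 : (q ^ a : ℕ) ∣ m * m := by
    rw [hm, ← pow_add]
    exact pow_dvd_pow q (by omega)
  set T : R := ∑ j ∈ range m, (n : R) * ((j : R) + 1) ^ (n - 1) with hT
  have key : ∀ c ∈ range q, ∀ j ∈ range m,
      (((c * m + j : ℕ) : R) + 1) ^ n
      = ((j : R) + 1) ^ n + (n : R) * ((j : R) + 1) ^ (n - 1) * ((c : R) * (m : R)) := by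
    intro c _ j _
    push_cast
    rw [Nat.cast_mul]
    rw [show (c : R) * m + j + 1 = ((j : R) + 1) + ((c : R) * m) by ring]
    apply sq_zero_pow _ _ _ n hn
    rw [show ((c : R) * (m : R)) * ((c : R) * (m : R)) = ((c : R)*(c : R)) * ((m : R)*(m : R)) by
      ring]
    have h0 : ((m * m : ℕ) : R) = 0 := (ZMod.natCast_eq_zero_iff _ _).mpr hm2
    push_cast at h0
    rw [Nat.cast_mul (α := ZMod (q ^ a))] at h0
    rw [h0, mul_zero]
  have hms : (m : R) * ∑ c ∈ range q, (c : R) = 0 := by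
    have hcast : (m : R) * ∑ c ∈ range q, (c : R) = ((m * ∑ c ∈ range q, c : ℕ) : R) := by
      push_cast; rw [Nat.cast_mul (α := ZMod (q ^ a)), Nat.cast_sum]
    rw [hcast, ZMod.natCast_eq_zero_iff]
    obtain ⟨t, ht⟩ := hodd
    have hsum : (∑ c ∈ range q, c) = q * t := by
      have h2 : (∑ c ∈ range q, c) * 2 = q * (q - 1) := Finset.sum_range_id_mul_two q
      have h3 : q - 1 = 2 * t := by omega
      rw [h3, show q * (2 * t) = (q * t) * 2 by ring] at h2
      omega
    rw [hsum]
    exact ⟨t, by rw [hqm]; ring⟩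
  calc ((S n (q ^ a) : ℕ) : R)
      = ∑ c ∈ range q, ∑ j ∈ range m, (((c * m + j : ℕ) : R) + 1) ^ n := by
        rw [S_cast]
        have h4 := sum_range_mul' (fun i => ((i : R) + 1) ^ n) q m
        rw [← hqm] at h4
        exact h4
    _ = ∑ c ∈ range q, ((S n m : ℕ) + T * ((c : R) * (m : R))) := by
        refine Finset.sum_congr rfl fun c hc => ?_
        calc ∑ j ∈ range m, (((c * m + j : ℕ) : R) + 1) ^ n
            = ∑ j ∈ range m, (((j : R) + 1) ^ n
                + (n : R) * ((j : R) + 1) ^ (n - 1) * ((c : R) * (m : R))) :=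
              Finset.sum_congr rfl (key c hc)
          _ = ((S n m : ℕ) : R) + T * ((c : R) * (m : R)) := by
              rw [Finset.sum_add_distrib, S_cast, ← Finset.sum_mul, hT]
    _ = q • ((S n m : ℕ) : R) + ∑ c ∈ range q, T * ((c : R) * (m : R)) := by
        rw [Finset.sum_add_distrib, Finset.sum_const, Finset.card_range]
    _ = q • ((S n m : ℕ) : R) + T * ((m : R) * ∑ c ∈ range q, (c : R)) := by
        congr 1
        rw [Finset.mul_sum, Finset.mul_sum]
        exact Finset.sum_congr rfl fun c _ => by ring
    _ = ((q * S n m : ℕ) : R) := by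
        rw [hms, mul_zero, add_zero, nsmul_eq_mul]; push_cast; rw [Nat.cast_mul (α := ZMod (q ^ a))]

/-- S n (q^a) ≡ q^(a-1) * S n q mod q^a -/
lemma S_pow (n q : ℕ) (hn : 1 ≤ n) (hodd : Odd q) :
    ∀ a, 1 ≤ a → S n (q ^ a) ≡ q ^ (a - 1) * S n q [MOD q ^ a] := by
  intro a
  induction a with
  | zero => omega
  | succ a ih =>
    intro _
    rcases Nat.eq_zero_or_pos a with rfl | hpos
    · simpa using Nat.ModEq.refl _
    have h1 : S n (q ^ (a+1)) ≡ q * S n (q ^ a) [MOD q ^ (a+1)] := by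
      have := S_step n q (a+1) hn hodd (by omega)
      simpa using this
    have h2 : q * S n (q ^ a) ≡ q * (q ^ (a-1) * S n q) [MOD q * q ^ a] :=
      Nat.ModEq.mul_left' q (ih hpos)
    have h3 : q * q ^ a = q ^ (a + 1) := by ring
    rw [h3] at h2
    refine h1.trans ?_
    calc q * S n (q ^ a) ≡ q * (q ^ (a-1) * S n q) [MOD q^(a+1)] := h2
      _ = q ^ a * S n q := by rw [← mul_assoc, ← pow_succ']; congr 2; omega

lemma S_prime (n q : ℕ) (hn : 1 ≤ n) (hq : q.Prime) :
    ((q - 1 ∣ n) → S n q ≡ q - 1 [MOD q]) ∧ (¬ (q - 1 ∣ n) → S n q ≡ 0 [MOD q]) := by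
  haveI : Fact q.Prime := ⟨hq⟩
  haveI : NeZero q := ⟨hq.ne_zero⟩
  classical
  have hmain : ∑ i ∈ range q, ((i : ZMod q) + 1) ^ n = ∑ x : ZMod q, x ^ n := by
    refine Finset.sum_nbij' (fun i => ((i : ZMod q) + 1)) (fun x => (x - 1).val) ?_ ?_ ?_ ?_ ?_
    · intro a _; exact Finset.mem_univ _
    · intro x _; exact Finset.mem_range.mpr (ZMod.val_lt _)
    · intro a ha
      simp only [add_sub_cancel_right]
      exact ZMod.val_cast_of_lt (Finset.mem_range.mp ha)
    · intro x _
      simp [ZMod.natCast_zmod_val]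
    · intro a _; rfl
  have h0 : ∑ x : ZMod q, x ^ n = ∑ x : (ZMod q)ˣ, ((x : ZMod q)) ^ n := by
    let φ : (ZMod q)ˣ ↪ ZMod q := ⟨fun x ↦ x, Units.val_injective⟩
    have hφ : univ.map φ = univ \ {0} := by
      ext x
      simp only [mem_map, mem_univ, Function.Embedding.coeFn_mk, true_and, mem_sdiff,
        mem_singleton, φ]
      exact isUnit_iff_ne_zero
    calc ∑ x : ZMod q, x ^ n = ∑ x ∈ univ \ {(0 : ZMod q)}, x ^ n := by
          rw [← sum_sdiff ({0} : Finset (ZMod q)).subset_univ, sum_singleton,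
            zero_pow (by omega), add_zero]
      _ = ∑ x : (ZMod q)ˣ, ((x : ZMod q)) ^ n := by simp [φ, ← hφ, univ.sum_map φ]
  have hu := FiniteField.sum_pow_units (ZMod q) n
  rw [ZMod.card] at hu
  have hcast : ((S n q : ℕ) : ZMod q) = if q - 1 ∣ n then (-1 : ZMod q) else 0 := by
    rw [S_cast, hmain, h0, ← hu]
  constructor
  · intro h
    rw [← ZMod.natCast_eq_natCast_iff, hcast, if_pos h]
    rw [Nat.cast_sub hq.one_le]
    simp
  · intro h
    rw [← ZMod.natCast_eq_natCast_iff, hcast, if_neg h]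
    simp

theorem stmt2 (n q a : ℕ) (hn : 1 ≤ n) (hq : q.Prime) (hodd : Odd q) (ha : 1 ≤ a) :
    ((q - 1 ∣ n) → S n (q ^ a) ≡ Nat.totient (q ^ a) [MOD q ^ a]) ∧
    (¬ (q - 1 ∣ n) → S n (q ^ a) ≡ 0 [MOD q ^ a]) := by
  have hrec := S_pow n q hn hodd a ha
  have hqa : q ^ a = q ^ (a-1) * q := by rw [← pow_succ]; congr 1; omega
  have hSp := S_prime n q hn hq
  constructor
  · intro h
    have h1 : q ^ (a-1) * S n q ≡ q ^ (a-1) * (q - 1) [MOD q ^ (a-1) * q] :=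
      Nat.ModEq.mul_left' _ (hSp.1 h)
    rw [← hqa] at h1
    refine hrec.trans (h1.trans ?_)
    rw [Nat.totient_prime_pow hq (by omega)]
  · intro h
    have h1 : q ^ (a-1) * S n q ≡ q ^ (a-1) * 0 [MOD q ^ (a-1) * q] :=
      Nat.ModEq.mul_left' _ (hSp.2 h)
    rw [← hqa, mul_zero] at h1
    exact hrec.trans h1
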